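/- If S is a skew-symmetric integer n×n matrix, then the cokernel of S (as a map Z^n → Z^n) is isomorphic to Z^r ⊕ (Z/m_1 ⊕ Z/m_1) ⊕ ... ⊕ (Z/m_s ⊕ Z/m_s) for some natural number r and positive integers m_1 | m_2 | ... | m_s. -/

import Mathlib

open Module LinearMap Matrix

attribute [-instance] AddCommGroup.toIntModule

section helpers

/-- skew-symmetry from alternating -/
lemma alt_skew {V : Type} [AddCommGroup V] [Module ℤ V] (ω : V →ₗ[ℤ] V →ₗ[ℤ] ℤ)
    (halt : ∀ x, ω x x = 0) (x y : V) : ω x y = - ω y x := by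
  have h := halt (x + y)
  simp only [map_add, LinearMap.add_apply, halt x, halt y] at h
  omega

/-- quotient of a product by a product of submodules -/
noncomputable def quotProdEquiv {R M N : Type*} [CommRing R] [AddCommGroup M] [AddCommGroup N]
    [Module R M] [Module R N] (p : Submodule R M) (q : Submodule R N) :
    ((M × N) ⧸ p.prod q) ≃ₗ[R] (M ⧸ p) × (N ⧸ q) := by
  have hker : LinearMap.ker (p.mkQ.prodMap q.mkQ) = p.prod q := by
    rw [LinearMap.ker_prodMap, Submodule.ker_mkQ, Submodule.ker_mkQ]
  have hsurj : Function.Surjective (p.mkQ.prodMap q.mkQ) := by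
    rintro ⟨a, b⟩
    obtain ⟨a', rfl⟩ := p.mkQ_surjective a
    obtain ⟨b', rfl⟩ := q.mkQ_surjective b
    exact ⟨(a', b'), rfl⟩
  exact (Submodule.quotEquivOfEq _ _ hker.symm).trans
    ((p.mkQ.prodMap q.mkQ).quotKerEquivOfSurjective hsurj)

/-- dependent pi over Fin (s+1) splits -/
def piFinSuccAddEquiv {s : ℕ} (β : Fin (s + 1) → Type) [∀ i, AddCommGroup (β i)] :
    (∀ i, β i) ≃+ β 0 × ∀ i : Fin s, β i.succ where
  toFun f := (f 0, fun i => f i.succ)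
  invFun p := Fin.cons p.1 p.2
  left_inv f := Fin.cons_self_tail f
  right_inv p := rfl
  map_add' f g := rfl

/-- a finite free ℤ-module is ℤ^rank -/
noncomputable def freeEquivFun (W : Type) [AddCommGroup W] [Module ℤ W]
    [Module.Free ℤ W] [Module.Finite ℤ W] :
    W ≃ₗ[ℤ] (Fin (Module.finrank ℤ W) → ℤ) :=
  ((Module.Free.chooseBasis ℤ W).reindex ((Fintype.equivFin _).trans
    (finCongr (Module.finrank_eq_card_chooseBasisIndex ℤ W).symm))).equivFun

end helpers

section symp

/-- scaled standard symplectic form on `ℤ²` -/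
def symp (a : ℤ) : (ℤ × ℤ) →ₗ[ℤ] (ℤ × ℤ) →ₗ[ℤ] ℤ :=
  LinearMap.mk₂ ℤ (fun u v => a * (u.1 * v.2 - u.2 * v.1))
    (by intros; simp; ring) (by intros; simp [smul_eq_mul]; ring)
    (by intros; simp; ring) (by intros; simp [smul_eq_mul]; ring)

/-- standard self-duality of `ℤ²` -/
def dualProdInt : (ℤ × ℤ) →ₗ[ℤ] Module.Dual ℤ (ℤ × ℤ) :=
  LinearMap.mk₂ ℤ (fun u v => u.1 * v.1 + u.2 * v.2)
    (by intros; simp; ring) (by intros; simp [smul_eq_mul]; ring)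
    (by intros; simp; ring) (by intros; simp [smul_eq_mul]; ring)

def dualProdIntEquiv : (ℤ × ℤ) ≃ₗ[ℤ] Module.Dual ℤ (ℤ × ℤ) :=
  LinearEquiv.ofLinear dualProdInt
    ((LinearMap.applyₗ (((1:ℤ),(0:ℤ)))).prod (LinearMap.applyₗ (((0:ℤ),(1:ℤ)))))
    (by ext <;> simp [dualProdInt])
    (by ext <;> simp [dualProdInt])

lemma symp_eq (a : ℤ) (u : ℤ × ℤ) :
    symp a u = dualProdIntEquiv (-(a * u.2), a * u.1) := by
  ext <;> simp [symp, dualProdIntEquiv, dualProdInt] <;> ring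

lemma symp_map (a : ℤ) :
    Submodule.map (dualProdIntEquiv : (ℤ × ℤ) →ₗ[ℤ] Module.Dual ℤ (ℤ × ℤ))
        (Submodule.prod (Ideal.span {a}) (Ideal.span {a}))
      = LinearMap.range (symp a) := by
  apply le_antisymm
  · rintro _ ⟨⟨p, q⟩, ⟨hp, hq⟩, rfl⟩
    simp only [Submodule.mem_prod] at *
    obtain ⟨s, rfl⟩ := Ideal.mem_span_singleton'.mp hp
    obtain ⟨t, rfl⟩ := Ideal.mem_span_singleton'.mp hq
    refine ⟨(t, -s), ?_⟩
    rw [symp_eq]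
    norm_num [mul_comm]
  · rintro _ ⟨u, rfl⟩
    rw [symp_eq]
    exact ⟨(-(a * u.2), a * u.1), ⟨Ideal.mem_span_singleton'.mpr ⟨-u.2, by ring⟩,
      Ideal.mem_span_singleton'.mpr ⟨u.1, by ring⟩⟩, rfl⟩

noncomputable def sympBlockEquiv (a : ℕ) :
    (Module.Dual ℤ (ℤ × ℤ) ⧸ LinearMap.range (symp (a : ℤ))) ≃+ ZMod a × ZMod a :=
  ((Submodule.Quotient.equiv _ _ dualProdIntEquiv (symp_map (a : ℤ))).symm.trans
    (quotProdEquiv _ _)).toAddEquiv.trans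
    (AddEquiv.prodCongr (Int.quotientSpanNatEquivZMod a).toAddEquiv
      (Int.quotientSpanNatEquivZMod a).toAddEquiv)

end symp

section main

set_option maxHeartbeats 2000000 in
lemma main_induction : ∀ (N : ℕ) (V : Type) [AddCommGroup V] [Module ℤ V]
    [Module.Free ℤ V] [Module.Finite ℤ V], Module.finrank ℤ V = N →
    ∀ (ω : V →ₗ[ℤ] V →ₗ[ℤ] ℤ), (∀ x, ω x x = 0) →
    ∃ (r s : ℕ) (m : Fin s → ℕ), (∀ i, 0 < m i) ∧ (∀ i j : Fin s, i ≤ j → m i ∣ m j) ∧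
      (∀ c : ℤ, (∀ x y, c ∣ ω x y) → ∀ i, c ∣ (m i : ℤ)) ∧
      Nonempty ((Module.Dual ℤ V ⧸ LinearMap.range ω) ≃+
        ((Fin r → ℤ) × ∀ i : Fin s, ZMod (m i) × ZMod (m i))) := by
  intro N
  induction N using Nat.strong_induction_on with
  | _ N IH =>
  intro V _ _ _ _ hrank ω halt
  by_cases hω : ω = 0
  · -- zero form
    refine ⟨Module.finrank ℤ (Module.Dual ℤ V), 0, fun i => i.elim0, fun i => i.elim0,
      fun i => i.elim0, fun c _ i => i.elim0, ⟨?_⟩⟩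
    have hbot : LinearMap.range ω = ⊥ := by rw [hω]; exact LinearMap.range_zero
    exact ((Submodule.quotEquivOfEqBot _ hbot).trans
      (freeEquivFun (Module.Dual ℤ V))).toAddEquiv.trans AddEquiv.prodUnique.symm
  · -- nonzero form
    have skew : ∀ p q : V, ω p q = - ω q p := alt_skew ω halt
    have hb1 : ∀ (c : ℤ) (p q : V), ω (c • p) q = c * ω p q := by intros; simp
    have hb2 : ∀ (c : ℤ) (p q : V), ω p (c • q) = c * ω p q := by intros; simp
    have hts : ∀ (v : V) (c : ℤ), LinearMap.toSpanSingleton ℤ V v c = c • v := by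
      intro v c
      rw [LinearMap.toSpanSingleton_apply]
      exact int_smul_eq_zsmul _ c v
    have hex : ∃ x y, ω x y ≠ 0 := by
      by_contra h
      push_neg at h
      exact hω (by ext p q; simp [h])
    obtain ⟨x0, y0, hv⟩ := hex
    set T : Set ℕ := {k | 0 < k ∧ ∃ p q, ω p q = (k : ℤ)} with hT
    have hTne : T.Nonempty := by
      rcases hv.lt_or_gt with h | h
      · exact ⟨(ω x0 y0).natAbs, by omega, y0, x0, by rw [skew y0 x0]; omega⟩
      · exact ⟨(ω x0 y0).natAbs, by omega, x0, y0, by omega⟩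
    set a : ℕ := sInf T with ha
    obtain ⟨ha0, x, y, hxy⟩ : 0 < a ∧ ∃ p q, ω p q = (a : ℤ) := Nat.sInf_mem hTne
    have hmin : ∀ k ∈ T, a ≤ k := fun k hk => Nat.sInf_le hk
    have hdiv : ∀ p q : V, ω p q = (a : ℤ) → ∀ z, (a : ℤ) ∣ ω p z := by
      intro p q hpq z
      by_contra hnd
      have hane : (a : ℤ) ≠ 0 := by exact_mod_cast ha0.ne'
      set r : ℤ := ω p z % (a : ℤ) with hr
      have hr0 : 0 ≤ r := Int.emod_nonneg _ hane
      have hrlt : r < (a : ℤ) := Int.emod_lt_of_pos _ (by exact_mod_cast ha0)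
      have hrne : r ≠ 0 := fun h => hnd (Int.dvd_of_emod_eq_zero h)
      have hval : ω p (z - (ω p z / (a : ℤ)) • q) = r := by
        rw [map_sub, hb2, hpq, hr, Int.emod_def]
        ring
      have hrT : r.toNat ∈ T := ⟨by omega, p, _, by rw [hval, Int.toNat_of_nonneg hr0]⟩
      have := hmin _ hrT
      omega
    have hyx : ω y x = -(a : ℤ) := by rw [skew y x, hxy]
    have hx : ∀ z, (a : ℤ) ∣ ω x z := hdiv x y hxy
    have hy : ∀ z, (a : ℤ) ∣ ω y z := by
      refine hdiv y (-x) ?_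
      rw [map_neg, hyx]
      ring
    set M' : Submodule ℤ V := LinearMap.ker (ω x) ⊓ LinearMap.ker (ω y) with hM'
    have hxw : ∀ w : M', ω x ↑w = 0 := fun w => w.2.1
    have hyw : ∀ w : M', ω y ↑w = 0 := fun w => w.2.2
    have hwx : ∀ w : M', ω ↑w x = 0 := fun w => by rw [skew, hxw]; ring
    have hwy : ∀ w : M', ω ↑w y = 0 := fun w => by rw [skew, hyw]; ring
    set g : ((ℤ × ℤ) × M') →ₗ[ℤ] V :=
      ((LinearMap.toSpanSingleton ℤ V x).coprod (LinearMap.toSpanSingleton ℤ V y)).coprod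
        M'.subtype with hgdef
    have hg : ∀ (c d : ℤ) (w : M'), g ((c, d), w) = c • x + d • y + ↑w := by
      intro c d w
      show (LinearMap.toSpanSingleton ℤ V x) c + (LinearMap.toSpanSingleton ℤ V y) d
        + M'.subtype w = _
      rw [hts, hts, Submodule.subtype_apply]
    have hinj : Function.Injective g := by
      rw [injective_iff_map_eq_zero]
      rintro ⟨⟨c, d⟩, w⟩ hz
      rw [hg] at hz
      have h1 : ω x (c • x + d • y + ↑w) = d * (a : ℤ) := by
        simp only [map_add, hb2, halt x, hxy, hxw w]
        ring
      have h2 : ω y (c • x + d • y + ↑w) = -(c * (a : ℤ)) := by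
        simp only [map_add, hb2, halt y, hyx, hyw w]
        ring
      rw [hz, map_zero] at h1 h2
      have hane : (a : ℤ) ≠ 0 := by exact_mod_cast ha0.ne'
      have hd : d = 0 := by
        rcases mul_eq_zero.mp h1.symm with h | h
        · exact h
        · exact absurd h hane
      have hc : c = 0 := by
        have : c * (a : ℤ) = 0 := by omega
        rcases mul_eq_zero.mp this with h | h
        · exact h
        · exact absurd h hane
      subst hc; subst hd
      simp only [zero_smul, zero_add] at hz
      exact Prod.ext (Prod.ext rfl rfl) (Subtype.ext hz)
    have hsurj : Function.Surjective g := by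
      intro z
      obtain ⟨c1, hc1⟩ := hx z
      obtain ⟨c2, hc2⟩ := hy z
      have hw1 : ω x (z - c1 • y + c2 • x) = 0 := by
        simp only [map_add, map_sub, hb2, hc1, hxy, halt x]
        ring
      have hw2 : ω y (z - c1 • y + c2 • x) = 0 := by
        simp only [map_add, map_sub, hb2, hc2, halt y, hyx]
        ring
      refine ⟨((-c2, c1), ⟨z - c1 • y + c2 • x,
        Submodule.mem_inf.mpr ⟨LinearMap.mem_ker.mpr hw1, LinearMap.mem_ker.mpr hw2⟩⟩), ?_⟩
      rw [hg, neg_zsmul]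
      show _ + _ + (z - c1 • y + c2 • x) = z
      generalize c2 • x = A
      generalize c1 • y = B
      abel
    set e : ((ℤ × ℤ) × M') ≃ₗ[ℤ] V := LinearEquiv.ofBijective g ⟨hinj, hsurj⟩ with he
    have heg : ∀ p, e p = g p := fun p => rfl
    haveI : IsNoetherian ℤ V := isNoetherian_of_isNoetherianRing_of_finite ℤ V
    haveI : Module.Finite ℤ M' := Module.Finite.iff_fg.mpr (IsNoetherian.noetherian M')
    haveI : Module.Free ℤ M' := inferInstance
    have hfr : Module.finrank ℤ M' < N := by
      have h1 := e.finrank_eq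
      rw [hrank, Module.finrank_prod, Module.finrank_prod, Module.finrank_self] at h1
      omega
    set ω' : M' →ₗ[ℤ] M' →ₗ[ℤ] ℤ := ω.compl₁₂ M'.subtype M'.subtype with hω'
    have hω'app : ∀ w z : M', ω' w z = ω ↑w ↑z := fun w z => rfl
    have halt' : ∀ w : M', ω' w w = 0 := fun w => halt ↑w
    have hval' : ∀ w z : M', (a : ℤ) ∣ ω' w z := by
      intro w z
      have h1 : ω (y + ↑z) (-x) = (a : ℤ) := by
        rw [map_neg, skew (y + ↑z) x, map_add, hxy, hxw z]
        ring
      have h3 := hdiv (y + ↑z) (-x) h1 ↑w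
      rw [map_add, LinearMap.add_apply, hyw w] at h3
      rw [hω'app, skew ↑w ↑z]
      simpa using (dvd_neg.mpr h3)
    obtain ⟨r', s', m', hpos', hchain', hdvd', ⟨ε'⟩⟩ :=
      IH _ hfr M' rfl ω' halt'
    -- transport the quotient
    set ωP : ((ℤ × ℤ) × M') →ₗ[ℤ] ((ℤ × ℤ) × M') →ₗ[ℤ] ℤ :=
      ω.compl₁₂ (e : ((ℤ × ℤ) × M') →ₗ[ℤ] V) (e : ((ℤ × ℤ) × M') →ₗ[ℤ] V) with hωP
    have hωPapp : ∀ p q, ωP p q = ω (e p) (e q) := fun p q => rfl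
    have hfun : ∀ p, ωP p = e.dualMap (ω (e p)) := fun p => LinearMap.ext fun q => rfl
    have hmapω : Submodule.map (e.dualMap : Module.Dual ℤ V →ₗ[ℤ] Module.Dual ℤ ((ℤ × ℤ) × M'))
        (LinearMap.range ω) = LinearMap.range ωP := by
      ext f
      constructor
      · rintro ⟨_, ⟨v, rfl⟩, rfl⟩
        exact ⟨e.symm v, by rw [hfun, e.apply_symm_apply]; rfl⟩
      · rintro ⟨p, rfl⟩
        exact ⟨ω (e p), ⟨e p, rfl⟩, (hfun p).symm⟩
    have hkey : ∀ (u : ℤ × ℤ) (w : M'), ωP (u, w) =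
        (Module.dualProdDualEquivDual ℤ (ℤ × ℤ) M') (symp (a : ℤ) u, ω' w) := by
      rintro ⟨c, d⟩ w
      apply LinearMap.ext
      rintro ⟨⟨c', d'⟩, w'⟩
      rw [hωPapp, heg, heg, hg, hg]
      simp only [Module.dualProdDualEquivDual_apply, LinearMap.coprod_apply,
        map_add, LinearMap.add_apply, hb1, hb2,
        halt x, halt y, hxy, hyx, hxw w', hyw w', hwx w, hwy w,
        hω'app, symp, LinearMap.mk₂_apply]
      ring
    have hblock : LinearMap.range ωP =
        Submodule.map ((Module.dualProdDualEquivDual ℤ (ℤ × ℤ) M') :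
            (Module.Dual ℤ (ℤ × ℤ) × Module.Dual ℤ M') →ₗ[ℤ] Module.Dual ℤ ((ℤ × ℤ) × M'))
          (Submodule.prod (LinearMap.range (symp (a : ℤ))) (LinearMap.range ω')) := by
      ext f
      constructor
      · rintro ⟨⟨u, w⟩, rfl⟩
        exact ⟨(symp (a : ℤ) u, ω' w), ⟨⟨u, rfl⟩, ⟨w, rfl⟩⟩, (hkey u w).symm⟩
      · rintro ⟨⟨φ, ψ⟩, ⟨⟨u, hu⟩, ⟨w, hw⟩⟩, rfl⟩
        exact ⟨(u, w), by rw [hkey u w, hu, hw]; rfl⟩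
    have Qe1 : (Module.Dual ℤ V ⧸ LinearMap.range ω) ≃ₗ[ℤ]
        (Module.Dual ℤ ((ℤ × ℤ) × M') ⧸ LinearMap.range ωP) :=
      Submodule.Quotient.equiv _ _ e.dualMap hmapω
    have Qe2 : (Module.Dual ℤ ((ℤ × ℤ) × M') ⧸ LinearMap.range ωP) ≃ₗ[ℤ]
        ((Module.Dual ℤ (ℤ × ℤ) × Module.Dual ℤ M') ⧸
          Submodule.prod (LinearMap.range (symp (a : ℤ))) (LinearMap.range ω')) :=
      (Submodule.Quotient.equiv _ _ (Module.dualProdDualEquivDual ℤ (ℤ × ℤ) M')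
        hblock.symm).symm
    have ε1 : (Module.Dual ℤ V ⧸ LinearMap.range ω) ≃+
        ((ZMod a × ZMod a) × ((Fin r' → ℤ) × ∀ i : Fin s', ZMod (m' i) × ZMod (m' i))) :=
      (Qe1.trans (Qe2.trans (quotProdEquiv _ _))).toAddEquiv.trans
        (AddEquiv.prodCongr (sympBlockEquiv a) ε')
    set m : Fin (s' + 1) → ℕ := Fin.cons a m' with hm
    have key0 : ∀ j : Fin (s' + 1), a ∣ m j := by
      refine Fin.cases ?_ ?_
      · simp [hm]
      · intro j
        simp only [hm, Fin.cons_succ]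
        exact_mod_cast hdvd' (a : ℤ) hval' j
    refine ⟨r', s' + 1, m, ?_, ?_, ?_, ⟨?_⟩⟩
    · refine Fin.cases ?_ ?_
      · simpa [hm] using ha0
      · intro i; simpa [hm, Fin.cons_succ] using hpos' i
    · intro i j
      refine Fin.cases (fun _ => key0 j) (fun i' => ?_) i
      refine Fin.cases (fun h => absurd h (by simp [Fin.le_def])) (fun j' h => ?_) j
      simpa only [hm, Fin.cons_succ] using hchain' i' j' (by
        simpa [Fin.succ_le_succ_iff] using h)
    · intro c hc
      refine Fin.cases ?_ ?_
      · have : c ∣ ω x y := hc x y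
        rw [hxy] at this
        simpa [hm] using this
      · intro i
        simpa only [hm, Fin.cons_succ] using hdvd' c (fun w z => by
          rw [hω'app]; exact hc ↑w ↑z) i
    · refine ε1.trans ?_
      refine ((AddEquiv.prodAssoc).symm.trans ?_)
      refine (AddEquiv.prodCongr AddEquiv.prodComm (AddEquiv.refl _)).trans ?_
      refine (AddEquiv.prodAssoc).trans ?_
      exact AddEquiv.prodCongr (AddEquiv.refl _)
        (piFinSuccAddEquiv (fun i => ZMod (m i) × ZMod (m i))).symm

end main

section final

/-- the standard self-duality of `ℤ^n` -/
def dotL (n : ℕ) : (Fin n → ℤ) →ₗ[ℤ] Module.Dual ℤ (Fin n → ℤ) :=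
  LinearMap.mk₂ ℤ (fun u v => u ⬝ᵥ v)
    (fun a b c => add_dotProduct a b c) (fun c a b => smul_dotProduct c a b)
    (fun a b c => dotProduct_add a b c) (fun c a b => dotProduct_smul c a b)

def dotLEquiv (n : ℕ) : (Fin n → ℤ) ≃ₗ[ℤ] Module.Dual ℤ (Fin n → ℤ) :=
  LinearEquiv.ofLinear (dotL n)
    (LinearMap.pi (fun i => LinearMap.applyₗ (Pi.single i 1)))
    (by
      apply LinearMap.ext; intro f
      apply LinearMap.ext; intro v
      show (fun i => f (Pi.single i 1)) ⬝ᵥ v = f v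
      have hsingle : ∀ i : Fin n, Pi.single (M := fun _ : Fin n => ℤ) i (v i)
          = v i • Pi.single i 1 := by
        intro i
        rw [← Pi.single_smul, smul_eq_mul, mul_one]
      conv_rhs => rw [← Finset.univ_sum_single v]
      rw [map_sum]
      simp only [dotProduct]
      refine Finset.sum_congr rfl fun i _ => ?_
      rw [hsingle i, LinearMap.map_smul f, smul_eq_mul, mul_comm])
    (by
      apply LinearMap.ext; intro u
      funext i
      show (fun j => u j) ⬝ᵥ Pi.single i 1 = u i
      simp [dotProduct_single])

theorem coker_equiv_dualquot (n : ℕ) (S : Matrix (Fin n) (Fin n) ℤ)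
    (hS : S.transpose = -S) :
    ∃ (ω : (Fin n → ℤ) →ₗ[ℤ] (Fin n → ℤ) →ₗ[ℤ] ℤ), (∀ v, ω v v = 0) ∧
      Nonempty (((Fin n → ℤ) ⧸ LinearMap.range S.mulVecLin) ≃ₗ[ℤ]
        (Module.Dual ℤ (Fin n → ℤ) ⧸ LinearMap.range ω)) := by
  set ω : (Fin n → ℤ) →ₗ[ℤ] (Fin n → ℤ) →ₗ[ℤ] ℤ :=
    LinearMap.mk₂ ℤ (fun v w => v ⬝ᵥ S.mulVec w)
      (fun a b c => add_dotProduct a b (S.mulVec c))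
      (fun c a b => smul_dotProduct c a (S.mulVec b))
      (fun a b c => by simp only [Matrix.mulVec_add, dotProduct_add])
      (fun c a b => by simp only [Matrix.mulVec_smul, dotProduct_smul]) with hω
  have hωapp : ∀ v w, ω v w = v ⬝ᵥ S.mulVec w := fun v w => rfl
  refine ⟨ω, ?_, ?_⟩
  · intro v
    have h2 : v ⬝ᵥ S.mulVec v = - (v ⬝ᵥ S.mulVec v) := by
      conv_lhs => rw [Matrix.dotProduct_mulVec, ← Matrix.mulVec_transpose, hS]
      rw [Matrix.neg_mulVec, neg_dotProduct, dotProduct_comm]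
    have h1 := hωapp v v
    omega
  · have hωd : ∀ v, ω v = dotL n (Sᵀ.mulVec v) := by
      intro v
      apply LinearMap.ext; intro w
      show v ⬝ᵥ S.mulVec w = (Sᵀ.mulVec v) ⬝ᵥ w
      rw [Matrix.dotProduct_mulVec, Matrix.mulVec_transpose]
    have hmap : Submodule.map (dotLEquiv n : (Fin n → ℤ) →ₗ[ℤ] Module.Dual ℤ (Fin n → ℤ))
          (LinearMap.range S.mulVecLin)
        = LinearMap.range ω := by
      ext f
      constructor
      · rintro ⟨_, ⟨v, rfl⟩, rfl⟩
        refine ⟨-v, ?_⟩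
        rw [hωd, hS]
        show dotL n ((-S).mulVec (-v)) = (dotLEquiv n) (S.mulVecLin v)
        rw [Matrix.neg_mulVec, Matrix.mulVec_neg, neg_neg]
        rfl
      · rintro ⟨v, rfl⟩
        refine ⟨S.mulVecLin (-v), ⟨-v, rfl⟩, ?_⟩
        rw [hωd, hS]
        show (dotLEquiv n) (S.mulVecLin (-v)) = dotL n ((-S).mulVec v)
        rw [Matrix.neg_mulVec, ← Matrix.mulVec_neg]
        rfl
    exact ⟨Submodule.Quotient.equiv _ _ (dotLEquiv n) hmap⟩

end final

/-- Cokernel of an integer matrix, viewed as the quotient of `ℤ^n` by its image. -/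
abbrev cokerG {m : Type} [Fintype m] [DecidableEq m] (S : Matrix m m ℤ) :=
  (m → ℤ) ⧸ LinearMap.range S.mulVecLin

/-- The cokernel of a skew-symmetric integer matrix is
`ℤ^r ⊕ (ℤ/m₁ ⊕ ℤ/m₁) ⊕ ⋯ ⊕ (ℤ/m_s ⊕ ℤ/m_s)` with `m₁ ∣ m₂ ∣ ⋯ ∣ m_s`. -/
theorem skew_symmetric_coker_structure (n : ℕ) (S : Matrix (Fin n) (Fin n) ℤ)
    (hS : S.transpose = -S) :
    ∃ (r s : ℕ) (m : Fin s → ℕ),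
      (∀ i, 0 < m i) ∧
      (∀ i j : Fin s, i ≤ j → m i ∣ m j) ∧
      Nonempty (cokerG S ≃+ ((Fin r → ℤ) × (∀ i : Fin s, ZMod (m i) × ZMod (m i)))) := by
  obtain ⟨ω, halt, ⟨Qe⟩⟩ := coker_equiv_dualquot n S hS
  obtain ⟨r, s, m, hpos, hchain, -, ⟨ε⟩⟩ :=
    main_induction (Module.finrank ℤ (Fin n → ℤ)) (Fin n → ℤ) rfl ω halt
  exact ⟨r, s, m, hpos, hchain, ⟨Qe.toAddEquiv.trans ε⟩⟩
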